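/- Let 0 < α < 1, 1 < β ≤ 2, μ_α ≥ 0 and μ_β < 0, and let m ≥ 2. Then the matrix I + D is strictly diagonally dominant and invertible. -/

import Mathlib

/-- Grünwald–Letnikov coefficients: `g γ 0 = 1`, `g γ k = (1 - (γ+1)/k) * g γ (k-1)`. -/
noncomputable def g (γ : ℝ) : ℕ → ℝ
  | 0 => 1
  | k + 1 => (1 - (γ + 1) / ((k : ℝ) + 1)) * g γ k

/-- WSGD coefficients: `w γ 0 = (γ/2) g γ 0`, `w γ k = (γ/2) g γ k + ((2-γ)/2) g γ (k-1)`. -/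
noncomputable def w (γ : ℝ) : ℕ → ℝ
  | 0 => γ / 2 * g γ 0
  | k + 1 => γ / 2 * g γ (k + 1) + (2 - γ) / 2 * g γ k

/-- The `(m-1) × (m-1)` lower-Hessenberg Toeplitz matrix with entries
`w_{i-j+1}^{(γ)}` for `j ≤ i+1` (1-based indices) and `0` otherwise. -/
noncomputable def wsgdMatrix (γ : ℝ) (m : ℕ) : Matrix (Fin (m - 1)) (Fin (m - 1)) ℝ :=
  fun i j => if (j : ℕ) ≤ (i : ℕ) + 1 then w γ ((i : ℕ) + 1 - (j : ℕ)) else 0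

/-- The Crank–Nicolson matrix `D = μ_α (A + Aᵀ) + μ_β (B + Bᵀ)`. -/
noncomputable def matD (α β μα μβ : ℝ) (m : ℕ) : Matrix (Fin (m - 1)) (Fin (m - 1)) ℝ :=
  μα • (wsgdMatrix α m + Matrix.transpose (wsgdMatrix α m)) + μβ • (wsgdMatrix β m + Matrix.transpose (wsgdMatrix β m))


lemma g_zero (γ : ℝ) : g γ 0 = 1 := rfl
lemma g_succ (γ : ℝ) (k : ℕ) : g γ (k+1) = (1 - (γ + 1) / ((k : ℝ) + 1)) * g γ k := rfl
lemma w_zero (γ : ℝ) : w γ 0 = γ / 2 := by simp [w, g]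
lemma w_succ (γ : ℝ) (k : ℕ) : w γ (k+1) = γ / 2 * g γ (k + 1) + (2 - γ) / 2 * g γ k := rfl

lemma g_shift (γ : ℝ) : ∀ n : ℕ, g γ (n+1) = g (γ-1) (n+1) - g (γ-1) n
  | 0 => by norm_num [g_succ, g_zero]
  | (n+1) => by
    have h1 : ((n:ℝ) + 1) ≠ 0 := by positivity
    have h2 : ((n:ℝ) + 1 + 1) ≠ 0 := by positivity
    have IH := g_shift γ n
    have e1 : g (γ-1) (n+1) = (1 - γ / ((n:ℝ)+1)) * g (γ-1) n := by
      rw [g_succ]; ring_nf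
    rw [g_succ γ (n+1), IH, e1, g_succ (γ-1) (n+1), e1]
    push_cast
    field_simp
    ring

noncomputable def W (γ : ℝ) (n : ℕ) : ℝ := ∑ k ∈ Finset.range (n+1), w γ k

lemma W_succ (γ : ℝ) (n : ℕ) : W γ (n+1) = W γ n + w γ (n+1) := Finset.sum_range_succ _ _

lemma W_formula (γ : ℝ) : ∀ n : ℕ, W γ (n+1) = γ/2 * g (γ-1) (n+1) + (2-γ)/2 * g (γ-1) n
  | 0 => by
    have := g_shift γ 0
    simp only [W, Finset.sum_range_succ, Finset.sum_range_one, w_zero, w_succ, g_zero]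
    rw [this]
    simp [g_zero]
    ring
  | (n+1) => by
    rw [W_succ, W_formula γ n, w_succ, g_shift γ (n+1), g_shift γ n]
    ring

section Signs
variable {α β : ℝ}

lemma g_am1_pos (hα0 : 0 < α) (hα1 : α < 1) : ∀ k, 0 < g (α-1) k
  | 0 => one_pos
  | (k+1) => by
    have IH := g_am1_pos hα0 hα1 k
    have hf : 0 < 1 - (α - 1 + 1) / ((k:ℝ)+1) := by
      have : (α - 1 + 1) / ((k:ℝ)+1) < 1 := by
        rw [div_lt_one (by positivity)]
        have : (0:ℝ) ≤ (k:ℝ) := Nat.cast_nonneg k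
        linarith
      linarith
    rw [g_succ]; positivity

lemma g_a_nonpos (hα0 : 0 < α) (hα1 : α < 1) : ∀ k, g α (k+1) ≤ 0
  | 0 => by rw [g_succ, g_zero]; norm_num; linarith
  | (k+1) => by
    have IH := g_a_nonpos hα0 hα1 k
    have hf : 0 ≤ 1 - (α + 1) / ((k:ℝ)+1+1) := by
      rw [sub_nonneg, div_le_one (by positivity)]
      have : (0:ℝ) ≤ (k:ℝ) := Nat.cast_nonneg k
      linarith
    rw [g_succ]
    push_cast
    exact mul_nonpos_of_nonneg_of_nonpos hf IH

lemma g_bm1_nonpos (hβ1 : 1 < β) (hβ2 : β ≤ 2) : ∀ k, g (β-1) (k+1) ≤ 0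
  | 0 => by rw [g_succ, g_zero]; norm_num; linarith
  | (k+1) => by
    have IH := g_bm1_nonpos hβ1 hβ2 k
    have hf : 0 ≤ 1 - (β - 1 + 1) / ((k:ℝ)+1+1) := by
      rw [sub_nonneg, div_le_one (by positivity)]
      have : (0:ℝ) ≤ (k:ℝ) := Nat.cast_nonneg k
      linarith
    rw [g_succ]
    push_cast
    exact mul_nonpos_of_nonneg_of_nonpos hf IH

lemma g_b_nonneg (hβ1 : 1 < β) (hβ2 : β ≤ 2) : ∀ k, 0 ≤ g β (k+2)
  | 0 => by
    rw [g_succ, g_succ, g_zero]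
    norm_num
    nlinarith
  | (k+1) => by
    have IH := g_b_nonneg hβ1 hβ2 k
    have hf : 0 ≤ 1 - (β + 1) / ((k:ℝ)+2+1) := by
      rw [sub_nonneg, div_le_one (by positivity)]
      have : (0:ℝ) ≤ (k:ℝ) := Nat.cast_nonneg k
      linarith
    have : g β (k+3) = (1 - (β + 1) / ((k:ℝ)+2+1)) * g β (k+2) := by
      rw [g_succ]; push_cast; ring_nf
    calc (0:ℝ) ≤ (1 - (β + 1) / ((k:ℝ)+2+1)) * g β (k+2) := mul_nonneg hf IH
    _ = g β (k+3) := this.symm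

lemma w_a_nonpos (hα0 : 0 < α) (hα1 : α < 1) (k : ℕ) : w α (k+2) ≤ 0 := by
  rw [w_succ]
  have h1 := g_a_nonpos hα0 hα1 (k+1)
  have h2 := g_a_nonpos hα0 hα1 k
  nlinarith

lemma w_b_nonneg (hβ1 : 1 < β) (hβ2 : β ≤ 2) (k : ℕ) : 0 ≤ w β (k+3) := by
  rw [w_succ]
  have h1 := g_b_nonneg hβ1 hβ2 (k+1)
  have h2 := g_b_nonneg hβ1 hβ2 k
  nlinarith

lemma w_a1_pos (hα0 : 0 < α) (hα1 : α < 1) : 0 < w α 1 := by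
  rw [w_succ, g_succ, g_zero]
  norm_num
  nlinarith

lemma w_b1_neg (hβ1 : 1 < β) (hβ2 : β ≤ 2) : w β 1 < 0 := by
  rw [w_succ, g_succ, g_zero]
  norm_num
  nlinarith

lemma w_a02 (hα0 : 0 < α) (hα1 : α < 1) : w α 0 + w α 2 ≤ 0 := by
  rw [w_zero, w_succ, g_succ, g_succ, g_zero]
  norm_num
  have h : 0 < α * (1 - α) := mul_pos hα0 (by linarith)
  nlinarith [mul_pos h (show (0:ℝ) < α + 2 by linarith)]

lemma w_b02 (hβ1 : 1 < β) (hβ2 : β ≤ 2) : 0 ≤ w β 0 + w β 2 := by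
  rw [w_zero, w_succ, g_succ, g_succ, g_zero]
  norm_num
  have h : 0 < β * (β - 1) := mul_pos (by linarith) (by linarith)
  nlinarith [mul_pos h (show (0:ℝ) < β + 2 by linarith)]

lemma W_a_nonneg (hα0 : 0 < α) (hα1 : α < 1) (n : ℕ) : 0 ≤ W α (n+1) := by
  rw [W_formula]
  have h1 := g_am1_pos hα0 hα1 (n+1)
  have h2 := g_am1_pos hα0 hα1 n
  nlinarith

lemma W_b_nonpos (hβ1 : 1 < β) (hβ2 : β ≤ 2) (n : ℕ) : W β (n+2) ≤ 0 := by
  rw [show n+2 = (n+1)+1 from rfl, W_formula]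
  have h1 := g_bm1_nonpos hβ1 hβ2 (n+1)
  have h2 := g_bm1_nonpos hβ1 hβ2 n
  nlinarith

end Signs

lemma sumIcc (γ : ℝ) : ∀ n : ℕ, ∑ k ∈ Finset.Icc 3 (n+2), w γ k = W γ (n+2) - W γ 2
  | 0 => by simp [show Finset.Icc 3 2 = (∅ : Finset ℕ) by decide]
  | (n+1) => by
    have h1 : ∑ k ∈ Finset.Icc 3 (n+1+2), w γ k = (∑ k ∈ Finset.Icc 3 (n+2), w γ k) + w γ (n+3) := by
      rw [show n+1+2 = (n+2)+1 from rfl, Finset.sum_Icc_succ_top (by omega)]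
    have h2 := sumIcc γ n
    have h3 : W γ (n+3) = W γ (n+2) + w γ (n+3) := W_succ γ (n+2)
    rw [h1, h2, show n+1+2 = n+3 from rfl, h3]; ring

lemma W2_eq (γ : ℝ) : W γ 2 = w γ 0 + w γ 1 + w γ 2 := by
  simp [W, Finset.sum_range_succ]

lemma bound_a {α : ℝ} (hα0 : 0 < α) (hα1 : α < 1) (n : ℕ) :
    |w α 0 + w α 2| + ∑ k ∈ Finset.Icc 3 n, |w α k| ≤ w α 1 := by
  have h02 := w_a02 hα0 hα1
  have habs : |w α 0 + w α 2| = -(w α 0 + w α 2) := abs_of_nonpos h02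
  have hsum : ∑ k ∈ Finset.Icc 3 n, |w α k| = -∑ k ∈ Finset.Icc 3 n, w α k := by
    rw [← Finset.sum_neg_distrib]
    refine Finset.sum_congr rfl fun k hk => ?_
    obtain ⟨j, rfl⟩ : ∃ j, k = j + 2 := ⟨k - 2, by have := (Finset.mem_Icc.mp hk).1; omega⟩
    exact abs_of_nonpos (w_a_nonpos hα0 hα1 j)
  rw [habs, hsum]
  have hW2 := W2_eq α
  rcases Nat.lt_or_ge n 3 with h | h
  · rw [show Finset.Icc 3 n = (∅ : Finset ℕ) by rw [Finset.Icc_eq_empty]; omega]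
    have := W_a_nonneg hα0 hα1 1
    simp only [Finset.sum_empty]
    linarith
  · obtain ⟨j, rfl⟩ : ∃ j, n = j + 2 := ⟨n - 2, by omega⟩
    rw [sumIcc]
    have := W_a_nonneg hα0 hα1 (j+1)
    have h2 : W α (1+1) = W α 2 := rfl
    linarith [this, hW2]

lemma bound_b {β : ℝ} (hβ1 : 1 < β) (hβ2 : β ≤ 2) (n : ℕ) :
    |w β 0 + w β 2| + ∑ k ∈ Finset.Icc 3 n, |w β k| ≤ -(w β 1) := by
  have h02 := w_b02 hβ1 hβ2
  have habs : |w β 0 + w β 2| = w β 0 + w β 2 := abs_of_nonneg h02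
  have hsum : ∑ k ∈ Finset.Icc 3 n, |w β k| = ∑ k ∈ Finset.Icc 3 n, w β k := by
    refine Finset.sum_congr rfl fun k hk => ?_
    obtain ⟨j, rfl⟩ : ∃ j, k = j + 3 := ⟨k - 3, by have := (Finset.mem_Icc.mp hk).1; omega⟩
    exact abs_of_nonneg (w_b_nonneg hβ1 hβ2 j)
  rw [habs, hsum]
  have hW2 := W2_eq β
  rcases Nat.lt_or_ge n 3 with h | h
  · rw [show Finset.Icc 3 n = (∅ : Finset ℕ) by rw [Finset.Icc_eq_empty]; omega]
    have := W_b_nonpos hβ1 hβ2 0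
    simp only [Finset.sum_empty]
    have h2 : W β (0+2) = W β 2 := rfl
    linarith
  · obtain ⟨j, rfl⟩ : ∃ j, n = j + 2 := ⟨n - 2, by omega⟩
    rw [sumIcc]
    have := W_b_nonpos hβ1 hβ2 j
    linarith [this, hW2]

noncomputable def F (γ : ℝ) (d : ℕ) : ℝ := if d = 1 then |w γ 0 + w γ 2| else |w γ (d+1)|

lemma F_nonneg (γ : ℝ) (d : ℕ) : 0 ≤ F γ d := by
  unfold F; split <;> positivity

lemma M_abs {γ : ℝ} {m : ℕ} (i j : Fin (m-1)) (h : (j:ℕ) < (i:ℕ)) :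
    |wsgdMatrix γ m i j + wsgdMatrix γ m j i| = F γ ((i:ℕ) - (j:ℕ)) := by
  unfold wsgdMatrix F
  rcases eq_or_lt_of_le (Nat.succ_le_of_lt h) with h1 | h1
  · rw [if_pos (by omega), if_pos (by omega),
      show (i:ℕ)+1-(j:ℕ) = 2 by omega, show (j:ℕ)+1-(i:ℕ) = 0 by omega,
      if_pos (by omega : (i:ℕ)-(j:ℕ) = 1), add_comm]
  · rw [if_pos (by omega), if_neg (by omega), if_neg (by omega : ¬ (i:ℕ)-(j:ℕ) = 1),
      show (i:ℕ)+1-(j:ℕ) = ((i:ℕ)-(j:ℕ))+1 by omega, add_zero]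

lemma M_abs' {γ : ℝ} {m : ℕ} (i j : Fin (m-1)) (h : (i:ℕ) < (j:ℕ)) :
    |wsgdMatrix γ m i j + wsgdMatrix γ m j i| = F γ ((j:ℕ) - (i:ℕ)) := by
  rw [add_comm]; exact M_abs j i h

lemma F_sum_bound (γ : ℝ) (m : ℕ) (hm : 2 ≤ m) :
    ∑ d ∈ Finset.Icc 1 (m-1-1), F γ d ≤ |w γ 0 + w γ 2| + ∑ k ∈ Finset.Icc 3 m, |w γ k| := by
  rcases Nat.eq_zero_or_pos (m-1-1) with h | h
  · rw [h, show Finset.Icc 1 0 = (∅ : Finset ℕ) by decide, Finset.sum_empty]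
    positivity
  · rw [Finset.Icc_eq_cons_Ioc h, Finset.sum_cons]
    have h1 : F γ 1 = |w γ 0 + w γ 2| := if_pos rfl
    have h2 : ∑ d ∈ Finset.Ioc 1 (m-1-1), F γ d = ∑ d ∈ Finset.Ioc 1 (m-1-1), |w γ (d+1)| := by
      refine Finset.sum_congr rfl fun d hd => ?_
      have := (Finset.mem_Ioc.mp hd).1
      exact if_neg (by omega)
    have h3 : ∑ d ∈ Finset.Ioc 1 (m-1-1), |w γ (d+1)| =
        ∑ k ∈ (Finset.Ioc 1 (m-1-1)).image (· + 1), |w γ k| := by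
      rw [Finset.sum_image (by intro a _ b _ hab; exact Nat.add_right_cancel hab)]
    have h4 : ∑ k ∈ (Finset.Ioc 1 (m-1-1)).image (· + 1), |w γ k| ≤
        ∑ k ∈ Finset.Icc 3 m, |w γ k| := by
      refine Finset.sum_le_sum_of_subset_of_nonneg ?_ (fun k _ _ => abs_nonneg _)
      intro k hk
      simp only [Finset.mem_image, Finset.mem_Ioc] at hk
      obtain ⟨a, ⟨ha1, ha2⟩, rfl⟩ := hk
      simp only [Finset.mem_Icc]
      omega
    rw [h1, h2, h3]
    exact add_le_add le_rfl h4

lemma row_bound (γ : ℝ) (m : ℕ) (hm : 2 ≤ m) (i : Fin (m-1)) :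
    ∑ j ∈ Finset.univ.erase i, |wsgdMatrix γ m i j + wsgdMatrix γ m j i| ≤
      2 * (|w γ 0 + w γ 2| + ∑ k ∈ Finset.Icc 3 m, |w γ k|) := by
  classical
  set s := Finset.univ.erase i
  rw [← Finset.sum_filter_add_sum_filter_not s (fun (j : Fin (m-1)) => (j:ℕ) < (i:ℕ))]
  have hi : (i:ℕ) ≤ m - 1 - 1 := by omega
  have hL : ∑ j ∈ s.filter (fun (j : Fin (m-1)) => (j:ℕ) < (i:ℕ)), |wsgdMatrix γ m i j + wsgdMatrix γ m j i|
      ≤ ∑ d ∈ Finset.Icc 1 (m-1-1), F γ d := by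
    rw [Finset.sum_congr rfl (fun j hj => M_abs i j (Finset.mem_filter.mp hj).2)]
    rw [show ∑ j ∈ s.filter (fun (j : Fin (m-1)) => (j:ℕ) < (i:ℕ)), F γ ((i:ℕ) - (j:ℕ))
        = ∑ d ∈ (s.filter (fun (j : Fin (m-1)) => (j:ℕ) < (i:ℕ))).image (fun (j : Fin (m-1)) => (i:ℕ) - (j:ℕ)), F γ d from
      (Finset.sum_image (by
        intro a ha b hb hab
        have ha' := (Finset.mem_filter.mp ha).2
        have hb' := (Finset.mem_filter.mp hb).2
        exact Fin.ext (by have hab' : (i:ℕ) - (a:ℕ) = (i:ℕ) - (b:ℕ) := hab; omega))).symm]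
    refine Finset.sum_le_sum_of_subset_of_nonneg ?_ (fun d _ _ => F_nonneg γ d)
    intro d hd
    simp only [Finset.mem_image, Finset.mem_filter] at hd
    obtain ⟨a, ⟨_, ha⟩, rfl⟩ := hd
    exact Finset.mem_Icc.mpr (by omega)
  have hR : ∑ j ∈ s.filter (fun (j : Fin (m-1)) => ¬ (j:ℕ) < (i:ℕ)), |wsgdMatrix γ m i j + wsgdMatrix γ m j i|
      ≤ ∑ d ∈ Finset.Icc 1 (m-1-1), F γ d := by
    have key : ∀ j ∈ s.filter (fun (j : Fin (m-1)) => ¬ (j:ℕ) < (i:ℕ)), (i:ℕ) < (j:ℕ) := by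
      intro j hj
      have h1 := (Finset.mem_filter.mp hj).2
      have h2 : j ≠ i := Finset.ne_of_mem_erase (Finset.mem_filter.mp hj).1
      have h3 : (j:ℕ) ≠ (i:ℕ) := fun hc => h2 (Fin.ext hc)
      omega
    rw [Finset.sum_congr rfl (fun j hj => M_abs' i j (key j hj))]
    rw [show ∑ j ∈ s.filter (fun (j : Fin (m-1)) => ¬ (j:ℕ) < (i:ℕ)), F γ ((j:ℕ) - (i:ℕ))
        = ∑ d ∈ (s.filter (fun (j : Fin (m-1)) => ¬ (j:ℕ) < (i:ℕ))).image (fun (j : Fin (m-1)) => (j:ℕ) - (i:ℕ)), F γ d from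
      (Finset.sum_image (by
        intro a ha b hb hab
        have ha' := key a ha
        have hb' := key b hb
        exact Fin.ext (by have hab' : (a:ℕ) - (i:ℕ) = (b:ℕ) - (i:ℕ) := hab; omega))).symm]
    refine Finset.sum_le_sum_of_subset_of_nonneg ?_ (fun d _ _ => F_nonneg γ d)
    intro d hd
    simp only [Finset.mem_image, Finset.mem_filter] at hd
    obtain ⟨a, ha, rfl⟩ := hd
    have h1 := key a (Finset.mem_filter.mpr ha)
    have h2 : (a:ℕ) ≤ m - 1 - 1 := by omega
    exact Finset.mem_Icc.mpr (by omega)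
  have := F_sum_bound γ m hm
  linarith

lemma wsgd_diag (γ : ℝ) (m : ℕ) (i : Fin (m-1)) : wsgdMatrix γ m i i = w γ 1 := by
  unfold wsgdMatrix
  rw [if_pos (by omega), show (i:ℕ)+1-(i:ℕ) = 1 by omega]

theorem stmt_16 (α β μα μβ : ℝ) (hα0 : 0 < α) (hα1 : α < 1) (hβ1 : 1 < β) (hβ2 : β ≤ 2)
    (hμα : 0 ≤ μα) (hμβ : μβ < 0) (m : ℕ) (hm : 2 ≤ m) :
    (∀ i : Fin (m - 1),
      ∑ j ∈ Finset.univ.erase i, |(1 + matD α β μα μβ m) i j| < |(1 + matD α β μα μβ m) i i|) ∧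
    IsUnit (1 + matD α β μα μβ m) := by
  have hw1a := w_a1_pos hα0 hα1
  have hw1b := w_b1_neg hβ1 hβ2
  have hba := bound_a hα0 hα1 m
  have hbb := bound_b hβ1 hβ2 m
  have hdiag : ∀ i : Fin (m-1),
      (1 + matD α β μα μβ m) i i = 1 + 2*(μα * w α 1) + 2*(μβ * w β 1) := by
    intro i
    simp only [matD, Matrix.add_apply, Matrix.smul_apply, Matrix.one_apply_eq,
      Matrix.transpose_apply, smul_eq_mul, wsgd_diag]
    ring
  have hdgpos : 0 < 1 + 2*(μα * w α 1) + 2*(μβ * w β 1) := by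
    have h1 : 0 ≤ μα * w α 1 := mul_nonneg hμα hw1a.le
    have h2 : 0 < μβ * w β 1 := mul_pos_of_neg_of_neg hμβ hw1b
    linarith
  have main : ∀ i : Fin (m - 1),
      ∑ j ∈ Finset.univ.erase i, |(1 + matD α β μα μβ m) i j| < |(1 + matD α β μα μβ m) i i| := by
    intro i
    have step1 : ∑ j ∈ Finset.univ.erase i, |(1 + matD α β μα μβ m) i j| ≤
        μα * (∑ j ∈ Finset.univ.erase i, |wsgdMatrix α m i j + wsgdMatrix α m j i|)
        + (-μβ) * (∑ j ∈ Finset.univ.erase i, |wsgdMatrix β m i j + wsgdMatrix β m j i|) := by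
      rw [Finset.mul_sum, Finset.mul_sum, ← Finset.sum_add_distrib]
      refine Finset.sum_le_sum fun j hj => ?_
      have hne : i ≠ j := (Finset.ne_of_mem_erase hj).symm
      have hentry : (1 + matD α β μα μβ m) i j =
          μα * (wsgdMatrix α m i j + wsgdMatrix α m j i)
          + μβ * (wsgdMatrix β m i j + wsgdMatrix β m j i) := by
        simp only [matD, Matrix.add_apply, Matrix.one_apply_ne hne,
          Matrix.smul_apply, Matrix.transpose_apply, smul_eq_mul]
        ring
      rw [hentry]
      calc |μα * (wsgdMatrix α m i j + wsgdMatrix α m j i)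
          + μβ * (wsgdMatrix β m i j + wsgdMatrix β m j i)|
          ≤ |μα * (wsgdMatrix α m i j + wsgdMatrix α m j i)|
            + |μβ * (wsgdMatrix β m i j + wsgdMatrix β m j i)| := abs_add_le _ _
        _ = μα * |wsgdMatrix α m i j + wsgdMatrix α m j i|
            + (-μβ) * |wsgdMatrix β m i j + wsgdMatrix β m j i| := by
            rw [abs_mul, abs_mul, abs_of_nonneg hμα, abs_of_neg hμβ]
    have hSa := row_bound α m hm i
    have hSb := row_bound β m hm i
    have hSa' : ∑ j ∈ Finset.univ.erase i, |wsgdMatrix α m i j + wsgdMatrix α m j i|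
        ≤ 2 * w α 1 := le_trans hSa (by linarith)
    have hSb' : ∑ j ∈ Finset.univ.erase i, |wsgdMatrix β m i j + wsgdMatrix β m j i|
        ≤ 2 * (-(w β 1)) := le_trans hSb (by linarith)
    have h1 : μα * (∑ j ∈ Finset.univ.erase i, |wsgdMatrix α m i j + wsgdMatrix α m j i|)
        ≤ μα * (2 * w α 1) := mul_le_mul_of_nonneg_left hSa' hμα
    have h2 : (-μβ) * (∑ j ∈ Finset.univ.erase i, |wsgdMatrix β m i j + wsgdMatrix β m j i|)
        ≤ (-μβ) * (2 * (-(w β 1))) := mul_le_mul_of_nonneg_left hSb' (by linarith)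
    rw [hdiag i, abs_of_pos hdgpos]
    have : (-μβ) * (2 * (-(w β 1))) = 2*(μβ * w β 1) := by ring
    nlinarith [step1]
  refine ⟨main, ?_⟩
  have hdet : (1 + matD α β μα μβ m).det ≠ 0 := by
    refine det_ne_zero_of_sum_row_lt_diag fun k => ?_
    simpa [Real.norm_eq_abs] using main k
  exact (Matrix.isUnit_iff_isUnit_det _).mpr (isUnit_iff_ne_zero.mpr hdet)
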